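/- (Fourth E-isomorphism theorem) Let (A, E) be an exact category and let X' ↣ X ↠ X/X' be a short exact sequence in E. Then the assignment M ↦ M/X' gives an isomorphism of posets between {M : there are admissible monics X' ↣ M ↣ X compatible with the inclusion X' ↣ X} and the poset of admissible (E-)subobjects of X/X'. -/

import Mathlib

open CategoryTheory CategoryTheory.Limits

universe v u

variable {C : Type u} [Category.{v} C] [Preadditive C]

/-- `(i, d)` is a kernel-cokernel pair. -/
structure IsKernelCokernelPair {A B X : C} (i : A ⟶ B) (d : B ⟶ X) : Prop where
  w : i ≫ d = 0
  isKernel : Nonempty (IsLimit (KernelFork.ofι i w))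
  isCokernel : Nonempty (IsColimit (CokernelCofork.ofπ d w))

/-- A Quillen exact structure on an additive category. -/
structure ExactStructure (C : Type u) [Category.{v} C] [Preadditive C] :
    Type (max u v) where
  E : ∀ ⦃A B X : C⦄, (A ⟶ B) → (B ⟶ X) → Prop
  pair : ∀ ⦃A B X : C⦄ {i : A ⟶ B} {d : B ⟶ X}, E i d → IsKernelCokernelPair i d
  iso_closed : ∀ ⦃A B X A' B' X' : C⦄ {i : A ⟶ B} {d : B ⟶ X} {i' : A' ⟶ B'} {d' : B' ⟶ X'}
      (eA : A ≅ A') (eB : B ≅ B') (eX : X ≅ X'),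
      E i d → i ≫ eB.hom = eA.hom ≫ i' → d ≫ eX.hom = eB.hom ≫ d' → E i' d'
  admMono_id : ∀ A : C, ∃ (X : C) (d : A ⟶ X), E (𝟙 A) d
  admEpi_id : ∀ A : C, ∃ (X : C) (i : X ⟶ A), E i (𝟙 A)
  admMono_comp : ∀ ⦃A B D : C⦄ (f : A ⟶ B) (g : B ⟶ D),
      (∃ (X : C) (d : B ⟶ X), E f d) → (∃ (X : C) (d : D ⟶ X), E g d) →
      ∃ (X : C) (d : D ⟶ X), E (f ≫ g) d
  admEpi_comp : ∀ ⦃A B D : C⦄ (f : A ⟶ B) (g : B ⟶ D),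
      (∃ (X : C) (i : X ⟶ A), E i f) → (∃ (X : C) (i : X ⟶ B), E i g) →
      ∃ (X : C) (i : X ⟶ A), E i (f ≫ g)
  pushout_admMono : ∀ ⦃A B Z : C⦄ (i : A ⟶ B) (f : A ⟶ Z),
      (∃ (X : C) (d : B ⟶ X), E i d) →
      ∃ (D : C) (g : B ⟶ D) (j : Z ⟶ D) (w : i ≫ g = f ≫ j),
        Nonempty (IsColimit (PushoutCocone.mk g j w)) ∧ ∃ (X : C) (d : D ⟶ X), E j d
  pullback_admEpi : ∀ ⦃B D Z : C⦄ (h : B ⟶ D) (g : Z ⟶ D),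
      (∃ (X : C) (i : X ⟶ B), E i h) →
      ∃ (A : C) (f : A ⟶ B) (k : A ⟶ Z) (w : f ≫ h = k ≫ g),
        Nonempty (IsLimit (PullbackCone.mk f k w)) ∧ ∃ (X : C) (i : X ⟶ A), E i k

namespace ExactStructure

variable (Ex : ExactStructure C)

/-- `i` is an admissible monic. -/
def AdmMono {A B : C} (i : A ⟶ B) : Prop := ∃ (X : C) (d : B ⟶ X), Ex.E i d

/-- `d` is an admissible epic. -/
def AdmEpi {B X : C} (d : B ⟶ X) : Prop := ∃ (A : C) (i : A ⟶ B), Ex.E i d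

/-- `f` is admissible: it factors as an admissible epic followed by an admissible monic. -/
def Admissible {A B : C} (f : A ⟶ B) : Prop :=
  ∃ (Z : C) (e : A ⟶ Z) (m : Z ⟶ B), Ex.AdmEpi e ∧ Ex.AdmMono m ∧ e ≫ m = f

/-- `E` consists of all kernel-cokernel pairs. -/
def IsMaximalAll : Prop :=
  ∀ ⦃A B X : C⦄ (i : A ⟶ B) (d : B ⟶ X), IsKernelCokernelPair i d → Ex.E i d

/-- `S` is `E`-simple. -/
def ESimple (S : C) : Prop :=
  ¬ IsZero S ∧ ∀ ⦃A : C⦄ (i : A ⟶ S), Ex.AdmMono i → IsZero A ∨ IsIso i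

end ExactStructure

/-- `A` is abelian: it has finite products, kernels, cokernels, every mono is normal
and every epi is normal. -/
def IsAbelianCat (C : Type u) [Category.{v} C] [Preadditive C] : Prop :=
  HasFiniteProducts C ∧ HasKernels C ∧ HasCokernels C ∧
  (∀ ⦃X Y : C⦄ (f : X ⟶ Y), Mono f → Nonempty (NormalMono f)) ∧
  (∀ ⦃X Y : C⦄ (f : X ⟶ Y), Epi f → Nonempty (NormalEpi f))

/-- An admissible (`E`-)subobject of `X`. -/
structure ESub (Ex : ExactStructure C) (X : C) where
  obj : C
  ι : obj ⟶ X
  adm : Ex.AdmMono ι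

/-- The order on `E`-subobjects of `X`. -/
def ESubLe (Ex : ExactStructure C) {X : C} (s t : ESub Ex X) : Prop :=
  ∃ h : s.obj ⟶ t.obj, Ex.AdmMono h ∧ h ≫ t.ι = s.ι

/-- Two `E`-subobjects are isomorphic as subobjects. -/
def ESubEquiv (Ex : ExactStructure C) {X : C} (s t : ESub Ex X) : Prop :=
  ESubLe Ex s t ∧ ESubLe Ex t s

/-- The admissible intersection axiom (AI). -/
def AIAxiom (Ex : ExactStructure C) : Prop :=
  ∀ ⦃B Z D : C⦄ (g : B ⟶ D) (j : Z ⟶ D), Ex.AdmMono g → Ex.AdmMono j →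
    ∃ (A : C) (f : A ⟶ B) (f' : A ⟶ Z) (w : f ≫ g = f' ≫ j),
      Ex.AdmMono f ∧ Ex.AdmMono f' ∧ Nonempty (IsLimit (PullbackCone.mk f f' w))

/-- The admissible sum axiom (AS): for every pullback square of admissible monics,
the induced map from the pushout to the common codomain is an admissible monic. -/
def ASAxiom (Ex : ExactStructure C) : Prop :=
  ∀ ⦃A B Z D : C⦄ (f : A ⟶ B) (f' : A ⟶ Z) (g : B ⟶ D) (j : Z ⟶ D) (w : f ≫ g = f' ≫ j),
    Ex.AdmMono f → Ex.AdmMono f' → Ex.AdmMono g → Ex.AdmMono j →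
    IsLimit (PullbackCone.mk f f' w) →
    ∀ ⦃P : C⦄ (l : B ⟶ P) (k : Z ⟶ P) (w' : f ≫ l = f' ≫ k),
      IsColimit (PushoutCocone.mk l k w') →
      ∀ u : P ⟶ D, l ≫ u = g → k ≫ u = j → Ex.AdmMono u

/-- An AIS-category: an AI-category satisfying the admissible sum axiom. -/
def AISCat (Ex : ExactStructure C) : Prop := AIAxiom Ex ∧ ASAxiom Ex

/-- `f` is a kernel of some morphism. -/
def IsKernelMor {A B : C} (f : A ⟶ B) : Prop :=
  ∃ (Z : C) (g : B ⟶ Z) (w : f ≫ g = 0), Nonempty (IsLimit (KernelFork.ofι f w))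

/-- `f` is a cokernel of some morphism. -/
def IsCokernelMor {A B : C} (f : A ⟶ B) : Prop :=
  ∃ (Z : C) (g : Z ⟶ A) (w : g ≫ f = 0), Nonempty (IsColimit (CokernelCofork.ofπ f w))

/-- A quasi-abelian category: pre-abelian, kernels are stable under pushout and
cokernels are stable under pullback. -/
def IsQuasiAbelian (C : Type u) [Category.{v} C] [Preadditive C] : Prop :=
  HasKernels C ∧ HasCokernels C ∧
  (∀ ⦃A B Z : C⦄ (f : A ⟶ B) (t : A ⟶ Z), IsKernelMor f →
    ∀ ⦃P : C⦄ (s : B ⟶ P) (s' : Z ⟶ P) (w : f ≫ s = t ≫ s'),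
      IsColimit (PushoutCocone.mk s s' w) → IsKernelMor s') ∧
  (∀ ⦃A B Z : C⦄ (f : B ⟶ A) (t : Z ⟶ A), IsCokernelMor f →
    ∀ ⦃P : C⦄ (s : P ⟶ B) (s' : P ⟶ Z) (w : s ≫ f = s' ≫ t),
      IsLimit (PullbackCone.mk s s' w) → IsCokernelMor s')

/-- An `E`-composition series of length `n` for `X`. -/
structure CompSeries (Ex : ExactStructure C) (X : C) (n : ℕ) where
  obj : Fin (n + 1) → C
  map : ∀ i : Fin n, obj i.castSucc ⟶ obj i.succ
  zero : IsZero (obj 0)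
  top : obj (Fin.last n) ≅ X
  adm : ∀ i : Fin n, Ex.AdmMono (map i)
  simpleFactor : ∀ i : Fin n,
    ∃ (Q : C) (d : obj i.succ ⟶ Q), Ex.E (map i) d ∧ Ex.ESimple Q

/-- Two composition series are equivalent: there is a bijection of indices matching
isomorphic composition factors. -/
def CompSeries.EquivSeries {Ex : ExactStructure C} {X : C} {n m : ℕ}
    (s : CompSeries Ex X n) (t : CompSeries Ex X m) : Prop :=
  ∃ σ : Fin n ≃ Fin m, ∀ (i : Fin n) ⦃Q Q' : C⦄
    (d : s.obj i.succ ⟶ Q) (d' : t.obj (σ i).succ ⟶ Q'),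
    Ex.E (s.map i) d → Ex.E (t.map (σ i)) d' → Nonempty (Q ≅ Q')

/-- The Jordan-Hölder property for an exact structure. -/
def JordanHolder (Ex : ExactStructure C) : Prop :=
  ∀ (X : C) (n m : ℕ) (s : CompSeries Ex X n) (t : CompSeries Ex X m),
    n = m ∧ s.EquivSeries t

/-- A maximal `E`-subobject: one with `E`-simple cokernel. -/
def ESub.IsMax {Ex : ExactStructure C} {X : C} (A : ESub Ex X) : Prop :=
  ∃ (Q : C) (d : X ⟶ Q), Ex.E A.ι d ∧ Ex.ESimple Q

/-- `Y` belongs to the generalized intersection `Int_X(A, B)`: it is a maximal common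
`E`-subobject of `A` and `B`. -/
def InInt {Ex : ExactStructure C} {X : C} (A B Y : ESub Ex X) : Prop :=
  ESubLe Ex Y A ∧ ESubLe Ex Y B ∧
  ∀ Z : ESub Ex X, ESubLe Ex Z A → ESubLe Ex Z B → ESubLe Ex Y Z → ESubLe Ex Z Y

/-- A diamond exact category. -/
def DiamondCat (Ex : ExactStructure C) : Prop :=
  ∀ (X : C) (A B : ESub Ex X), A.IsMax → B.IsMax → ¬ ESubEquiv Ex A B →
    ∀ Y : ESub Ex X, InInt A B Y →
      (∀ (h : Y.obj ⟶ A.obj), Ex.AdmMono h → h ≫ A.ι = Y.ι →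
        ∀ ⦃Q : C⦄ (d : A.obj ⟶ Q), Ex.E h d → Ex.ESimple Q) ∧
      (∀ (h : Y.obj ⟶ B.obj), Ex.AdmMono h → h ≫ B.ι = Y.ι →
        ∀ ⦃Q : C⦄ (d : B.obj ⟶ Q), Ex.E h d → Ex.ESimple Q) ∧
      (∀ (hA : Y.obj ⟶ A.obj) (hB : Y.obj ⟶ B.obj), Ex.AdmMono hA → Ex.AdmMono hB →
        hA ≫ A.ι = Y.ι → hB ≫ B.ι = Y.ι →
        ∀ ⦃QXA QAY QXB QBY : C⦄
          (dXA : X ⟶ QXA) (dAY : A.obj ⟶ QAY) (dXB : X ⟶ QXB) (dBY : B.obj ⟶ QBY),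
          Ex.E A.ι dXA → Ex.E hA dAY → Ex.E B.ι dXB → Ex.E hB dBY →
          (Nonempty (QXA ≅ QXB) ∧ Nonempty (QAY ≅ QBY)) ∨
          (Nonempty (QXA ≅ QBY) ∧ Nonempty (QAY ≅ QXB)))

/-- An object between `X'` and `X`: admissible monics `X' ↣ M ↣ X` compatible with the
inclusion `i : X' ↣ X`. -/
structure Between (Ex : ExactStructure C) {X' X : C} (i : X' ⟶ X) where
  obj : C
  j : X' ⟶ obj
  k : obj ⟶ X
  hj : Ex.AdmMono j
  hk : Ex.AdmMono k
  w : j ≫ k = i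

/-- The order on objects between `X'` and `X`. -/
def BetweenLe (Ex : ExactStructure C) {X' X : C} {i : X' ⟶ X}
    (b₁ b₂ : Between Ex i) : Prop :=
  ∃ h : b₁.obj ⟶ b₂.obj, Ex.AdmMono h ∧ h ≫ b₂.k = b₁.k ∧ b₁.j ≫ h = b₂.j

section FourthIso

variable {C : Type u} [Category.{v} C] [Preadditive C] (Ex : ExactStructure C)

namespace FourthIsoAux

lemma mono_of_E {A B X : C} {i : A ⟶ B} {d : B ⟶ X} (h : Ex.E i d) : Mono i := by
  obtain ⟨hl⟩ := (Ex.pair h).isKernel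
  simpa using mono_of_isLimit_fork hl

lemma epi_of_E {A B X : C} {i : A ⟶ B} {d : B ⟶ X} (h : Ex.E i d) : Epi d := by
  obtain ⟨hc⟩ := (Ex.pair h).isCokernel
  simpa using epi_of_isColimit_cofork hc

lemma ker_lift {A B X T : C} {i : A ⟶ B} {d : B ⟶ X} (h : Ex.E i d)
    (t : T ⟶ B) (ht : t ≫ d = 0) : ∃ s : T ⟶ A, s ≫ i = t := by
  obtain ⟨hl⟩ := (Ex.pair h).isKernel
  obtain ⟨s, hs⟩ := KernelFork.IsLimit.lift' hl t ht
  exact ⟨s, by simpa using hs⟩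

lemma coker_desc {A B X T : C} {i : A ⟶ B} {d : B ⟶ X} (h : Ex.E i d)
    (t : B ⟶ T) (ht : i ≫ t = 0) : ∃ s : X ⟶ T, d ≫ s = t := by
  obtain ⟨hc⟩ := (Ex.pair h).isCokernel
  obtain ⟨s, hs⟩ := CokernelCofork.IsColimit.desc' hc t ht
  exact ⟨s, by simpa using hs⟩

/-- If `(κ, q) ∈ E` and `j` is another kernel of `q`, then `(j, q) ∈ E`. -/
lemma E_of_isKernel {K A B X : C} {κ : K ⟶ A} {q : A ⟶ B} (hκ : Ex.E κ q)
    {j : X ⟶ A} (w : j ≫ q = 0) (hj : IsLimit (KernelFork.ofι j w)) : Ex.E j q := by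
  obtain ⟨hl⟩ := (Ex.pair hκ).isKernel
  let e : X ≅ K := hj.conePointUniqueUpToIso hl
  have he : e.hom ≫ κ = j := by
    have := hj.conePointUniqueUpToIso_hom_comp hl WalkingParallelPair.zero
    simpa [e] using this
  refine Ex.iso_closed e.symm (Iso.refl A) (Iso.refl B) hκ ?_ ?_
  · simp [← he]
  · simp

/-- If `(j, c) ∈ E` and `c'` is another cokernel of `j`, then `(j, c') ∈ E`. -/
lemma E_of_isCokernel {A B X Y : C} {j : A ⟶ B} {c : B ⟶ X} (hc : Ex.E j c)
    {c' : B ⟶ Y} (w : j ≫ c' = 0) (hc' : IsColimit (CokernelCofork.ofπ c' w)) :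
    Ex.E j c' := by
  obtain ⟨hl⟩ := (Ex.pair hc).isCokernel
  let e : X ≅ Y := hl.coconePointUniqueUpToIso hc'
  have he : c ≫ e.hom = c' := by
    have := hl.comp_coconePointUniqueUpToIso_hom hc' WalkingParallelPair.one
    simpa [e] using this
  refine Ex.iso_closed (Iso.refl A) (Iso.refl B) e hc ?_ ?_
  · simp
  · simp [he]

lemma admMono_comp_iso {A B B' : C} {i : A ⟶ B} (h : Ex.AdmMono i) (e : B ≅ B') :
    Ex.AdmMono (i ≫ e.hom) := by
  obtain ⟨W, d, hd⟩ := h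
  exact ⟨W, e.inv ≫ d, Ex.iso_closed (Iso.refl A) e (Iso.refl W) hd (by simp) (by simp)⟩

lemma admMono_iso {A B : C} (e : A ≅ B) : Ex.AdmMono e.hom := by
  obtain ⟨W, d, hd⟩ := Ex.admMono_id A
  exact ⟨W, e.inv ≫ d, Ex.iso_closed (Iso.refl A) e (Iso.refl W) hd (by simp) (by simp)⟩

/-- Noether lemma: if `(j, c) ∈ E`, `h` is an admissible monic and `(j ≫ h, p') ∈ E`,
then the induced map `m` on cokernels with `c ≫ m = h ≫ p'` is an admissible monic. -/
lemma noether {A B X Qb Q' : C} {j : A ⟶ B} {c : B ⟶ Qb} {h : B ⟶ X} {p' : X ⟶ Q'}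
    (hc : Ex.E j c) (hh : Ex.AdmMono h) (hp : Ex.E (j ≫ h) p') :
    ∃ m : Qb ⟶ Q', Ex.AdmMono m ∧ c ≫ m = h ≫ p' := by
  obtain ⟨D, g, j', w, ⟨po⟩, hj'⟩ := Ex.pushout_admMono h c hh
  have hjc : j ≫ c = 0 := (Ex.pair hc).w
  have hepic : Epi c := epi_of_E Ex hc
  have w0 : (j ≫ h) ≫ g = 0 := by
    rw [Category.assoc, w, ← Category.assoc, hjc, zero_comp]
  -- `g` is a cokernel of `j ≫ h`
  have cog : IsColimit (CokernelCofork.ofπ g w0) := by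
    refine CokernelCofork.IsColimit.ofπ g w0 (fun {T} t ht => ?_) ?_ ?_
    · -- desc
      have ht' : j ≫ (h ≫ t) = 0 := by rw [← Category.assoc]; exact ht
      exact PushoutCocone.IsColimit.desc po t (coker_desc Ex hc (h ≫ t) ht').choose
        ((coker_desc Ex hc (h ≫ t) ht').choose_spec.symm)
    · intro T t ht
      exact PushoutCocone.IsColimit.inl_desc po t _ _
    · intro T t ht m hm
      have ht' : j ≫ (h ≫ t) = 0 := by rw [← Category.assoc]; exact ht
      obtain ⟨u, hu⟩ := coker_desc Ex hc (h ≫ t) ht'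
      have hju : j' ≫ m = (coker_desc Ex hc (h ≫ t) ht').choose := by
        apply (cancel_epi c).1
        rw [← Category.assoc, ← w, Category.assoc, hm,
          (coker_desc Ex hc (h ≫ t) ht').choose_spec]
      refine PushoutCocone.IsColimit.hom_ext po ?_ ?_
      · exact hm.trans (PushoutCocone.IsColimit.inl_desc po t _ _).symm
      · exact hju.trans (PushoutCocone.IsColimit.inr_desc po t _ _).symm
  -- compare with the given cokernel `p'`
  obtain ⟨cop⟩ := (Ex.pair hp).isCokernel
  let e : D ≅ Q' := cog.coconePointUniqueUpToIso cop
  have he : g ≫ e.hom = p' := by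
    have := cog.comp_coconePointUniqueUpToIso_hom cop WalkingParallelPair.one
    simpa [e] using this
  refine ⟨j' ≫ e.hom, admMono_comp_iso Ex hj' e, ?_⟩
  rw [← Category.assoc, ← w, Category.assoc, he]

/-- The key chase: the square `(b.k, c ; p, ι)` has the pullback lifting property. -/
lemma chase {X' X Q : C} {i : X' ⟶ X} {p : X ⟶ Q} (hE : Ex.E i p)
    (b : Between Ex i) {QM : C} {c : b.obj ⟶ QM} (hc : Ex.E b.j c)
    {ι : QM ⟶ Q} (hcomm : c ≫ ι = b.k ≫ p)
    {T : C} (t : T ⟶ X) (u : T ⟶ QM) (htu : t ≫ p = u ≫ ι) :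
    ∃ v : T ⟶ b.obj, v ≫ b.k = t ∧ v ≫ c = u := by
  obtain ⟨P, f, q, wpb, ⟨pb⟩, K, κ, hκ⟩ := Ex.pullback_admEpi c u ⟨X', b.j, hc⟩
  have hjc : b.j ≫ c = 0 := (Ex.pair hc).w
  have hδ : (f ≫ b.k - q ≫ t) ≫ p = 0 := by
    simp only [Preadditive.sub_comp, Category.assoc]
    rw [htu, ← hcomm, ← Category.assoc, ← Category.assoc, wpb, sub_self]
  obtain ⟨s, hs⟩ := ker_lift Ex hE _ hδ
  have hf'k : (f - s ≫ b.j) ≫ b.k = q ≫ t := by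
    simp only [Preadditive.sub_comp, Category.assoc]
    rw [b.w, hs]; abel
  have hf'c : (f - s ≫ b.j) ≫ c = q ≫ u := by
    simp only [Preadditive.sub_comp, Category.assoc]
    rw [hjc, comp_zero, sub_zero, wpb]
  have hκq : κ ≫ q = 0 := (Ex.pair hκ).w
  have hκf' : κ ≫ (f - s ≫ b.j) = 0 := by
    have h1 : (κ ≫ (f - s ≫ b.j)) ≫ c = 0 := by
      rw [Category.assoc, hf'c, ← Category.assoc, hκq, zero_comp]
    obtain ⟨s', hs'⟩ := ker_lift Ex hc _ h1
    have h2 : s' ≫ i = 0 := by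
      rw [← b.w, ← Category.assoc, hs', Category.assoc, hf'k, ← Category.assoc, hκq,
        zero_comp]
    haveI : Mono i := mono_of_E Ex hE
    have : s' = 0 := by rw [← cancel_mono i, zero_comp]; exact h2
    rw [← hs', this, zero_comp]
  obtain ⟨v, hv⟩ := coker_desc Ex hκ _ hκf'
  haveI : Epi q := epi_of_E Ex hκ
  constructor
  constructor
  · rw [← cancel_epi q, ← Category.assoc, hv, hf'k]
  · rw [← cancel_epi q, ← Category.assoc, hv, hf'c]

end FourthIsoAux

end FourthIso

/-- The fourth `E`-isomorphism theorem: for a short exact sequence `X' ↣ X ↠ Q` in `E`,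
the assignment `M ↦ M/X'` induces an isomorphism of posets between the objects between
`X'` and `X` and the admissible subobjects of `Q`. -/
theorem stmt3 (Ex : ExactStructure C) {X' X Q : C} (i : X' ⟶ X) (p : X ⟶ Q)
    (hE : Ex.E i p) :
    ∃ F : Between Ex i → ESub Ex Q,
      (∀ b, ∃ c : b.obj ⟶ (F b).obj, Ex.E b.j c ∧ b.k ≫ p = c ≫ (F b).ι) ∧
      (∀ b₁ b₂, BetweenLe Ex b₁ b₂ ↔ ESubLe Ex (F b₁) (F b₂)) ∧
      (∀ s : ESub Ex Q, ∃ b, ESubEquiv Ex (F b) s) := by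
  classical
  open FourthIsoAux in
  choose QM cF hcF using fun b : Between Ex i => (b.hj : ∃ W d, Ex.E b.j d)
  have hEb : ∀ b : Between Ex i, Ex.E (b.j ≫ b.k) p := fun b => by rw [b.w]; exact hE
  choose ιF hadm hcomm using fun b : Between Ex i =>
    FourthIsoAux.noether Ex (hcF b) b.hk (hEb b)
  refine ⟨fun b => ⟨QM b, ιF b, hadm b⟩, fun b => ⟨cF b, hcF b, (hcomm b).symm⟩, ?_, ?_⟩
  · -- order isomorphism
    intro b₁ b₂
    constructor
    · rintro ⟨h, hh, hk, hj⟩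
      have hE2 : Ex.E (b₁.j ≫ h) (cF b₂) := by rw [hj]; exact hcF b₂
      obtain ⟨m, hm, hcm⟩ := FourthIsoAux.noether Ex (hcF b₁) hh hE2
      refine ⟨m, hm, ?_⟩
      haveI : Epi (cF b₁) := FourthIsoAux.epi_of_E Ex (hcF b₁)
      show m ≫ ιF b₂ = ιF b₁
      rw [← cancel_epi (cF b₁), ← Category.assoc, hcm, Category.assoc, hcomm b₂,
        ← Category.assoc, hk, hcomm b₁]
    · rintro ⟨m, hm, hmι⟩
      have hmι' : m ≫ ιF b₂ = ιF b₁ := hmι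
      have htu : b₁.k ≫ p = (cF b₁ ≫ m) ≫ ιF b₂ := by
        rw [Category.assoc, hmι', hcomm b₁]
      obtain ⟨h, hhk, hhc⟩ := FourthIsoAux.chase Ex hE b₂ (hcF b₂) (hcomm b₂)
        b₁.k (cF b₁ ≫ m) htu
      haveI hmono2 : Mono b₂.k := by
        obtain ⟨W, d, hd⟩ := b₂.hk; exact FourthIsoAux.mono_of_E Ex hd
      haveI hmono1 : Mono b₁.k := by
        obtain ⟨W, d, hd⟩ := b₁.hk; exact FourthIsoAux.mono_of_E Ex hd
      have hj : b₁.j ≫ h = b₂.j := by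
        rw [← cancel_mono b₂.k, Category.assoc, hhk, b₁.w, b₂.w]
      refine ⟨h, ?_, hhk, hj⟩
      -- h is an admissible monic
      obtain ⟨W, d, hd⟩ := hm
      have hmd : m ≫ d = 0 := (Ex.pair hd).w
      obtain ⟨K, κ, hκ⟩ := Ex.admEpi_comp (cF b₂) d ⟨X', b₂.j, hcF b₂⟩ ⟨QM b₁, m, hd⟩
      have w0 : h ≫ (cF b₂ ≫ d) = 0 := by
        rw [← Category.assoc, hhc, Category.assoc, hmd, comp_zero]
      haveI hmonoh : Mono h := by
        haveI : Mono (h ≫ b₂.k) := by rw [hhk]; exact hmono1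
        exact mono_of_mono h b₂.k
      have key : ∀ {T : C} (t : T ⟶ b₂.obj), t ≫ (cF b₂ ≫ d) = 0 →
          ∃ v : T ⟶ b₁.obj, v ≫ h = t := by
        intro T t ht
        obtain ⟨s, hs⟩ := FourthIsoAux.ker_lift Ex hd (t ≫ cF b₂)
          (by rw [Category.assoc]; exact ht)
        have htu2 : (t ≫ b₂.k) ≫ p = s ≫ ιF b₁ := by
          rw [← hmι', ← Category.assoc, hs, Category.assoc, Category.assoc, hcomm b₂]
        obtain ⟨v, hv1, hv2⟩ := FourthIsoAux.chase Ex hE b₁ (hcF b₁) (hcomm b₁)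
          (t ≫ b₂.k) s htu2
        refine ⟨v, ?_⟩
        rw [← cancel_mono b₂.k, Category.assoc, hhk, hv1]
      have hker : IsLimit (KernelFork.ofι h w0) :=
        KernelFork.IsLimit.ofι h w0 (fun {T} t ht => (key t ht).choose)
          (fun {T} t ht => (key t ht).choose_spec)
          (fun {T} t ht mm hmm => by
            rw [← cancel_mono h, hmm, (key t ht).choose_spec])
      exact ⟨W, cF b₂ ≫ d, FourthIsoAux.E_of_isKernel Ex hκ w0 hker⟩
  · -- surjectivity
    intro s
    obtain ⟨M, k, c', wpb, ⟨pb⟩, K, κ, hκ⟩ := Ex.pullback_admEpi p s.ι ⟨X', i, hE⟩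
    have hip : i ≫ p = 0 := (Ex.pair hE).w
    have w0 : i ≫ p = (0 : X' ⟶ s.obj) ≫ s.ι := by rw [hip, zero_comp]
    set j : X' ⟶ M := PullbackCone.IsLimit.lift pb i 0 w0 with hjdef
    have hjk : j ≫ k = i := PullbackCone.IsLimit.lift_fst pb i 0 w0
    have hjc : j ≫ c' = 0 := PullbackCone.IsLimit.lift_snd pb i 0 w0
    haveI hsmono : Mono s.ι := by
      obtain ⟨W, d, hd⟩ := s.adm; exact FourthIsoAux.mono_of_E Ex hd
    have hkmono : Mono k := by
      constructor; intro T a b hab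
      have h1 : a ≫ c' = b ≫ c' := by
        rw [← cancel_mono s.ι, Category.assoc, Category.assoc, ← wpb,
          ← Category.assoc, ← Category.assoc, hab]
      exact PullbackCone.IsLimit.hom_ext pb hab h1
    haveI := hkmono
    haveI hjmono : Mono j := by
      haveI : Mono (j ≫ k) := by rw [hjk]; exact FourthIsoAux.mono_of_E Ex hE
      exact mono_of_mono j k
    -- j is a kernel of c'
    have keyj : ∀ {T : C} (t : T ⟶ M), t ≫ c' = 0 → ∃ v : T ⟶ X', v ≫ j = t := by
      intro T t ht
      have h1 : (t ≫ k) ≫ p = 0 := by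
        rw [Category.assoc, wpb, ← Category.assoc, ht, zero_comp]
      obtain ⟨w, hw⟩ := FourthIsoAux.ker_lift Ex hE (t ≫ k) h1
      refine ⟨w, PullbackCone.IsLimit.hom_ext pb ?_ ?_⟩
      · show (w ≫ j) ≫ k = t ≫ k
        rw [Category.assoc, hjk, hw]
      · show (w ≫ j) ≫ c' = t ≫ c'
        rw [Category.assoc, hjc, comp_zero, ht]
    have hjker : IsLimit (KernelFork.ofι j hjc) :=
      KernelFork.IsLimit.ofι j hjc (fun {T} t ht => (keyj t ht).choose)
        (fun {T} t ht => (keyj t ht).choose_spec)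
        (fun {T} t ht mm hmm => by rw [← cancel_mono j, hmm, (keyj t ht).choose_spec])
    have hEjc : Ex.E j c' := FourthIsoAux.E_of_isKernel Ex hκ hjc hjker
    -- k is an admissible monic
    obtain ⟨W, d, hd⟩ := s.adm
    obtain ⟨K', κ', hκ'⟩ := Ex.admEpi_comp p d ⟨X', i, hE⟩ ⟨s.obj, s.ι, hd⟩
    have wk : k ≫ (p ≫ d) = 0 := by
      rw [← Category.assoc, wpb, Category.assoc, (Ex.pair hd).w, comp_zero]
    have keyk : ∀ {T : C} (t : T ⟶ X), t ≫ (p ≫ d) = 0 → ∃ v : T ⟶ M, v ≫ k = t := by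
      intro T t ht
      obtain ⟨s₀, hs₀⟩ := FourthIsoAux.ker_lift Ex hd (t ≫ p)
        (by rw [Category.assoc]; exact ht)
      exact ⟨PullbackCone.IsLimit.lift pb t s₀ hs₀.symm,
        PullbackCone.IsLimit.lift_fst pb t s₀ hs₀.symm⟩
    have hkker : IsLimit (KernelFork.ofι k wk) :=
      KernelFork.IsLimit.ofι k wk (fun {T} t ht => (keyk t ht).choose)
        (fun {T} t ht => (keyk t ht).choose_spec)
        (fun {T} t ht mm hmm => by rw [← cancel_mono k, hmm, (keyk t ht).choose_spec])
    have hEk : Ex.E k (p ≫ d) := FourthIsoAux.E_of_isKernel Ex hκ' wk hkker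
    set b : Between Ex i := ⟨M, j, k, ⟨s.obj, c', hEjc⟩, ⟨W, p ≫ d, hEk⟩, hjk⟩ with hbdef
    refine ⟨b, ?_⟩
    -- compare the two cokernels of j
    obtain ⟨hcol⟩ := (Ex.pair (hcF b)).isCokernel
    obtain ⟨hcol'⟩ := (Ex.pair hEjc).isCokernel
    have hw1 : b.j ≫ cF b = 0 := (Ex.pair (hcF b)).w
    let e : QM b ≅ s.obj := hcol.coconePointUniqueUpToIso hcol'
    have he : cF b ≫ e.hom = c' := by
      have := hcol.comp_coconePointUniqueUpToIso_hom hcol' WalkingParallelPair.one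
      simpa [e] using this
    haveI : Epi (cF b) := FourthIsoAux.epi_of_E Ex (hcF b)
    have heq : e.hom ≫ s.ι = ιF b := by
      rw [← cancel_epi (cF b), ← Category.assoc, he, hcomm b]
      exact wpb.symm
    refine ⟨⟨e.hom, FourthIsoAux.admMono_iso Ex e, heq⟩,
      ⟨e.inv, FourthIsoAux.admMono_iso Ex e.symm, ?_⟩⟩
    show e.inv ≫ ιF b = s.ι
    rw [← heq, ← Category.assoc, e.inv_hom_id, Category.id_comp]
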